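/- Let k ≥ 2 and suppose f : (a,b) → ℝ is k-tone, i.e., f^[k](x_0,…,x_k) ≥ 0 for all pairwise distinct x_0,…,x_k in (a,b). Then f is of class C^{k−2} on (a,b) and f^{(k−2)} is convex on (a,b). -/

import Mathlib

noncomputable def divDiff (f : ℝ → ℝ) : (k : ℕ) → (Fin (k + 1) → ℝ) → ℝ
  | 0, x => f (x 0)
  | k + 1, x =>
      (divDiff f k (fun i => x i.castSucc) - divDiff f k (fun i => x i.succ)) /
        (x 0 - x (Fin.last (k + 1)))

open Finset

noncomputable def DD (f : ℝ → ℝ) (s : Finset ℝ) : ℝ :=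
  ∑ x ∈ s, f x / ∏ y ∈ s.erase x, (x - y)

lemma DD_singleton (f : ℝ → ℝ) (c : ℝ) : DD f {c} = f c := by
  simp [DD]

lemma prod_erase_ne_zero (s : Finset ℝ) (x : ℝ) :
    ∏ y ∈ s.erase x, (x - y) ≠ 0 := by
  rw [Finset.prod_ne_zero_iff]
  intro y hy
  have := Finset.ne_of_mem_erase hy
  intro h
  apply this
  linarith [sub_eq_zero.mp h]

lemma DD_erase (f : ℝ → ℝ) {s : Finset ℝ} {v : ℝ} (hv : v ∈ s) :
    DD f (s.erase v) = ∑ x ∈ s, f x * (x - v) / ∏ y ∈ s.erase x, (x - y) := by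
  rw [← Finset.add_sum_erase _ _ hv]
  have h0 : f v * (v - v) / ∏ y ∈ s.erase v, (v - y) = 0 := by simp
  rw [h0, zero_add, DD]
  apply Finset.sum_congr rfl
  intro x hx
  have hxv : x ≠ v := Finset.ne_of_mem_erase hx
  have hxs : x ∈ s := Finset.mem_of_mem_erase hx
  have hvex : v ∈ s.erase x := Finset.mem_erase.mpr ⟨fun h => hxv h.symm, hv⟩
  have key : ∏ y ∈ s.erase x, (x - y) = (x - v) * ∏ y ∈ (s.erase v).erase x, (x - y) := by
    rw [Finset.erase_right_comm]
    exact (Finset.mul_prod_erase _ _ hvex).symm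
  rw [key]
  have hP : ∏ y ∈ (s.erase v).erase x, (x - y) ≠ 0 := prod_erase_ne_zero _ _
  have hxv' : x - v ≠ 0 := sub_ne_zero.mpr hxv
  rw [div_eq_div_iff hP (by exact mul_ne_zero hxv' hP)]
  ring

lemma DD_rec (f : ℝ → ℝ) {s : Finset ℝ} {u v : ℝ} (hu : u ∈ s) (hv : v ∈ s) (huv : u ≠ v) :
    DD f s = (DD f (s.erase v) - DD f (s.erase u)) / (u - v) := by
  rw [DD_erase f hv, DD_erase f hu, ← Finset.sum_sub_distrib]
  rw [eq_div_iff (sub_ne_zero.mpr huv), DD, Finset.sum_mul]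
  apply Finset.sum_congr rfl
  intro x hx
  have hP := prod_erase_ne_zero s x
  field_simp
  ring

lemma DD_pair (f : ℝ → ℝ) {u v : ℝ} (huv : u ≠ v) :
    DD f {u, v} = (f u - f v) / (u - v) := by
  have h1 : ({u, v} : Finset ℝ).erase u = {v} := by
    rw [Finset.erase_insert (by simpa using huv)]
  have h2 : ({u, v} : Finset ℝ).erase v = {u} := by
    rw [Finset.insert_eq, Finset.erase_union_distrib]
    simp [Finset.erase_singleton, Finset.erase_eq_of_notMem, Ne.symm huv]
  rw [DD_rec f (by simp : u ∈ ({u,v}:Finset ℝ)) (by simp : v ∈ ({u,v}:Finset ℝ)) huv, h1, h2,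
    DD_singleton, DD_singleton]

lemma DD_const (c : ℝ) : ∀ (s : Finset ℝ), 2 ≤ s.card → DD (fun _ => c) s = 0 := by
  intro s
  induction s using Finset.strongInduction with
  | _ s ih =>
    intro hcard
    obtain ⟨u, hu, v, hv, huv⟩ := Finset.one_lt_card.mp hcard
    rw [DD_rec _ hu hv huv]
    rcases eq_or_lt_of_le hcard with h2 | h3
    · have hu1 : (s.erase u).card = 1 := by rw [Finset.card_erase_of_mem hu]; omega
      have hv1 : (s.erase v).card = 1 := by rw [Finset.card_erase_of_mem hv]; omega
      obtain ⟨w1, hw1⟩ := Finset.card_eq_one.mp hu1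
      obtain ⟨w2, hw2⟩ := Finset.card_eq_one.mp hv1
      rw [hw1, hw2, DD_singleton, DD_singleton]
      simp
    · have hcu : 2 ≤ (s.erase u).card := by
        rw [Finset.card_erase_of_mem hu]; omega
      have hcv : 2 ≤ (s.erase v).card := by
        rw [Finset.card_erase_of_mem hv]; omega
      rw [ih _ (Finset.erase_ssubset hu) hcu, ih _ (Finset.erase_ssubset hv) hcv]
      simp


lemma image_comp_castSucc {k : ℕ} (x : Fin (k + 2) → ℝ) (hx : Function.Injective x) :
    Finset.image (fun i : Fin (k+1) => x i.castSucc) Finset.univ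
      = (Finset.image x Finset.univ).erase (x (Fin.last (k+1))) := by
  ext y
  simp only [Finset.mem_image, Finset.mem_erase, Finset.mem_univ, true_and]
  constructor
  · rintro ⟨i, rfl⟩
    refine ⟨fun h => ?_, ⟨i.castSucc, rfl⟩⟩
    have := hx h
    exact (Fin.castSucc_lt_last i).ne this
  · rintro ⟨hne, i, rfl⟩
    rcases Fin.eq_castSucc_or_eq_last i with ⟨j, rfl⟩ | rfl
    · exact ⟨j, rfl⟩
    · exact absurd rfl hne

lemma image_comp_succ {k : ℕ} (x : Fin (k + 2) → ℝ) (hx : Function.Injective x) :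
    Finset.image (fun i : Fin (k+1) => x i.succ) Finset.univ
      = (Finset.image x Finset.univ).erase (x 0) := by
  ext y
  simp only [Finset.mem_image, Finset.mem_erase, Finset.mem_univ, true_and]
  constructor
  · rintro ⟨i, rfl⟩
    refine ⟨fun h => ?_, ⟨i.succ, rfl⟩⟩
    exact (Fin.succ_ne_zero i) (hx h)
  · rintro ⟨hne, i, rfl⟩
    rcases Fin.eq_zero_or_eq_succ i with rfl | ⟨j, rfl⟩
    · exact absurd rfl hne
    · exact ⟨j, rfl⟩

lemma divDiff_eq_DD (f : ℝ → ℝ) : ∀ (k : ℕ) (x : Fin (k + 1) → ℝ), Function.Injective x →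
    divDiff f k x = DD f (Finset.image x Finset.univ) := by
  intro k
  induction k with
  | zero =>
    intro x _
    have : Finset.image x Finset.univ = {x 0} := by
      ext y
      simp only [Finset.mem_image, Finset.mem_univ, true_and, Finset.mem_singleton]
      constructor
      · rintro ⟨i, rfl⟩; rw [Subsingleton.elim (0 : Fin 1) i]
      · rintro rfl; exact ⟨0, rfl⟩
    rw [this, DD_singleton]; rfl
  | succ k ih =>
    intro x hx
    have h0 : x 0 ∈ Finset.image x Finset.univ := Finset.mem_image_of_mem _ (Finset.mem_univ _)
    have hL : x (Fin.last (k+1)) ∈ Finset.image x Finset.univ :=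
      Finset.mem_image_of_mem _ (Finset.mem_univ _)
    have hne : x 0 ≠ x (Fin.last (k+1)) := by
      intro h
      have h2 : (0 : ℕ) = k + 1 := congrArg Fin.val (hx h)
      omega
    rw [show divDiff f (k+1) x = (divDiff f k (fun i => x i.castSucc)
        - divDiff f k (fun i => x i.succ)) / (x 0 - x (Fin.last (k+1))) from rfl]
    rw [ih (fun i => x i.castSucc) (fun i j h => Fin.castSucc_injective _ (hx h)),
      ih (fun i => x i.succ) (fun i j h => Fin.succ_injective _ (hx h)),
      image_comp_castSucc x hx, image_comp_succ x hx]
    exact (DD_rec f h0 hL hne).symm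

lemma DD_slope_insert (h : ℝ → ℝ) (c : ℝ) {s : Finset ℝ} (hc : c ∉ s) (hne : s.Nonempty) :
    DD (fun t => (h t - h c) / (t - c)) s = DD h (insert c s) := by
  have hprod : ∀ x ∈ s, ∏ y ∈ (insert c s).erase x, (x - y)
      = (x - c) * ∏ y ∈ s.erase x, (x - y) := by
    intro x hx
    have hxc : x ≠ c := fun hh => hc (hh ▸ hx)
    rw [Finset.erase_insert_of_ne hxc.symm,
      Finset.prod_insert (fun hmem => hc (Finset.mem_of_mem_erase hmem))]
  have hconst : DD (fun _ => (1:ℝ)) (insert c s) = 0 := by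
    apply DD_const
    rw [Finset.card_insert_of_notMem hc]
    have := Finset.card_pos.mpr hne
    omega
  have hexpand : ∀ (g : ℝ → ℝ), DD g (insert c s)
      = g c / ∏ y ∈ s, (c - y) + ∑ x ∈ s, g x / ((x - c) * ∏ y ∈ s.erase x, (x - y)) := by
    intro g
    rw [DD, Finset.sum_insert hc, Finset.erase_insert hc]
    congr 1
    exact Finset.sum_congr rfl fun x hx => by rw [hprod x hx]
  have hzero : ∑ x ∈ s, 1 / ((x - c) * ∏ y ∈ s.erase x, (x - y))
      = - (1 / ∏ y ∈ s, (c - y)) := by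
    have := hexpand (fun _ => (1:ℝ))
    rw [hconst] at this
    linarith [this]
  rw [hexpand h]
  rw [DD]
  have key : ∀ x ∈ s, (h x - h c) / (x - c) / ∏ y ∈ s.erase x, (x - y)
      = h x / ((x - c) * ∏ y ∈ s.erase x, (x - y))
        - h c * (1 / ((x - c) * ∏ y ∈ s.erase x, (x - y))) := by
    intro x hx
    have hxc : x - c ≠ 0 := sub_ne_zero.mpr (fun hh => hc (hh ▸ hx))
    have hP := prod_erase_ne_zero s x
    field_simp
  rw [Finset.sum_congr rfl key, Finset.sum_sub_distrib, ← Finset.mul_sum, hzero]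
  ring

def Dtone (m : ℕ) (f : ℝ → ℝ) (T : Set ℝ) : Prop :=
  ∀ s : Finset ℝ, s.card = m + 1 → ↑s ⊆ T → 0 ≤ DD f s

lemma Dtone_slope {m : ℕ} {h : ℝ → ℝ} {T : Set ℝ} (ht : Dtone (m+1) h T) {c : ℝ} (hcT : c ∈ T) :
    Dtone m (fun t => (h t - h c) / (t - c)) (T \ {c}) := by
  intro s hcard hsub
  have hc : c ∉ s := fun hmem => (hsub hmem).2 rfl
  have hne : s.Nonempty := Finset.card_pos.mp (by omega)
  rw [DD_slope_insert h c hc hne]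
  apply ht
  · rw [Finset.card_insert_of_notMem hc, hcard]
  · intro y hy
    rcases Finset.mem_insert.mp hy with rfl | hys
    · exact hcT
    · exact (hsub hys).1

lemma DD_mono {k : ℕ} {f : ℝ → ℝ} {T : Set ℝ} (ht : Dtone (k+1) f T)
    {s : Finset ℝ} (hcard : s.card = k) (hsub : ↑s ⊆ T) {u w : ℝ}
    (hu : u ∈ T) (hw : w ∈ T) (huw : u < w) (hus : u ∉ s) (hws : w ∉ s) :
    DD f (insert u s) ≤ DD f (insert w s) := by
  have hne : u ≠ w := ne_of_lt huw
  have huws : u ∉ insert w s := by simp [hne, hus]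
  have hwus : w ∉ insert u s := by simp [hne.symm, hws]
  set S := insert u (insert w s) with hS
  have hSw : S = insert w (insert u s) := by rw [hS, Finset.insert_comm]
  have huS : u ∈ S := Finset.mem_insert_self _ _
  have hwS : w ∈ S := by rw [hSw]; exact Finset.mem_insert_self _ _
  have hcardS : S.card = (k + 1) + 1 := by
    rw [hS, Finset.card_insert_of_notMem huws, Finset.card_insert_of_notMem hws, hcard]
  have hsubS : ↑S ⊆ T := by
    intro y hy
    rcases Finset.mem_insert.mp hy with rfl | hy2
    · exact hu
    rcases Finset.mem_insert.mp hy2 with rfl | hy3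
    · exact hw
    · exact hsub hy3
  have h0 : 0 ≤ DD f S := ht S hcardS hsubS
  rw [DD_rec f hwS huS hne.symm] at h0
  have heu : S.erase u = insert w s := by rw [hS]; exact Finset.erase_insert huws
  have hew : S.erase w = insert u s := by rw [hSw]; exact Finset.erase_insert hwus
  rw [heu, hew] at h0
  rcases div_nonneg_iff.mp h0 with ⟨h1, _⟩ | ⟨_, h2⟩
  · linarith
  · linarith

lemma DD_shift {k : ℕ} {f : ℝ → ℝ} {T : Set ℝ} (ht : Dtone (k+1) f T)
    {s : Finset ℝ} (hcard : s.card = k + 1) (hs : ↑s ⊆ T) {h : ℝ} (hh : 0 < h)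
    (hsh : ↑(s.image (· + h)) ⊆ T) : DD f s ≤ DD f (s.image (· + h)) := by
  suffices H : ∀ n (p q : Finset ℝ), p ∪ q = s → Disjoint p q →
      (∀ x ∈ p, ∀ y ∈ q, x < y) → p.card = n →
      DD f (p ∪ q.image (· + h)) ≤ DD f (s.image (· + h)) by
    have := H (k+1) s ∅ (by simp) (by simp) (by simp) hcard
    simpa using this
  intro n
  induction n with
  | zero =>
    intro p q hunion _ _ hp
    rw [Finset.card_eq_zero.mp hp] at hunion ⊢
    rw [Finset.empty_union] at hunion ⊢
    rw [hunion]
  | succ n ihn =>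
    intro p q hunion hdisj horder hp
    have hpne : p.Nonempty := Finset.card_pos.mp (by omega)
    set m := p.max' hpne with hm
    have hmp : m ∈ p := p.max'_mem hpne
    have hms : m ∈ s := hunion ▸ Finset.mem_union_left _ hmp
    set p' := p.erase m with hp'
    set q' := insert m q with hq'
    have hmq : m ∉ q := Finset.disjoint_left.mp hdisj hmp
    -- the common rest
    set r := p' ∪ q.image (· + h) with hr
    have hmub : ∀ x ∈ p, x ≤ m := fun x hx => p.le_max' x hx
    have hmr : m ∉ r := by
      intro hmem
      rcases Finset.mem_union.mp hmem with h1 | h2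
      · exact (Finset.notMem_erase m p) h1
      · obtain ⟨t, htq, hteq⟩ := Finset.mem_image.mp h2
        have : m < t := horder m hmp t htq
        linarith
    have hmhr : m + h ∉ r := by
      intro hmem
      rcases Finset.mem_union.mp hmem with h1 | h2
      · have := hmub (m + h) (Finset.mem_of_mem_erase h1)
        linarith
      · obtain ⟨t, htq, hteq⟩ := Finset.mem_image.mp h2
        have : m < t := horder m hmp t htq
        linarith
    have hins1 : p ∪ q.image (· + h) = insert m r := by
      rw [hr, ← Finset.insert_union, hp', Finset.insert_erase hmp]
    have hins2 : p' ∪ q'.image (· + h) = insert (m + h) r := by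
      rw [hq', Finset.image_insert, Finset.union_insert, hr]
    have hrsub : ↑r ⊆ T := by
      intro y hy
      rcases Finset.mem_union.mp hy with h1 | h2
      · exact hs (hunion ▸ Finset.mem_union_left _ (Finset.mem_of_mem_erase h1))
      · apply hsh
        obtain ⟨t, htq, hteq⟩ := Finset.mem_image.mp h2
        exact Finset.mem_image.mpr ⟨t, hunion ▸ Finset.mem_union_right _ htq, hteq⟩
    have hdisj2 : Disjoint p' (q.image (· + h)) := by
      rw [Finset.disjoint_left]
      intro x hx1 hx2
      obtain ⟨t, htq, hteq⟩ := Finset.mem_image.mp hx2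
      have h1 : x ≤ m := hmub x (Finset.mem_of_mem_erase hx1)
      have h2 : m < t := horder m hmp t htq
      have : t + h = x := hteq
      linarith
    have hcardr : r.card = k := by
      have hcardq : (q.image (· + h)).card = q.card :=
        Finset.card_image_of_injective _ (add_left_injective h)
      have hcardpq : p.card + q.card = k + 1 := by
        rw [← Finset.card_union_of_disjoint hdisj, hunion, hcard]
      have hcardp' : p'.card = n := by
        rw [hp', Finset.card_erase_of_mem hmp, hp]
        omega
      rw [hr, Finset.card_union_of_disjoint hdisj2, hcardq, hcardp']
      omega
    have hmhT : m + h ∈ T := hsh (Finset.mem_image.mpr ⟨m, hms, rfl⟩)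
    have step : DD f (p ∪ q.image (· + h)) ≤ DD f (p' ∪ q'.image (· + h)) := by
      rw [hins1, hins2]
      exact DD_mono ht hcardr hrsub (hs hms) hmhT (by linarith) hmr hmhr
    refine step.trans (ihn p' q' ?_ ?_ ?_ ?_)
    · rw [hq', Finset.union_insert, ← Finset.insert_union, hp', Finset.insert_erase hmp, hunion]
    · rw [Finset.disjoint_left]
      intro x hx1 hx2
      rcases Finset.mem_insert.mp hx2 with heq | hx3
      · exact (Finset.notMem_erase m p) (by rwa [heq] at hx1)
      · exact Finset.disjoint_left.mp hdisj (Finset.mem_of_mem_erase hx1) hx3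
    · intro x hx y hy
      rcases Finset.mem_insert.mp hy with rfl | hy2
      · exact lt_of_le_of_ne (hmub x (Finset.mem_of_mem_erase hx)) (Finset.ne_of_mem_erase hx)
      · exact horder x (Finset.mem_of_mem_erase hx) y hy2
    · rw [hp', Finset.card_erase_of_mem hmp, hp]
      omega

open Filter Topology Set

/-- slope -/
noncomputable def sl (f : ℝ → ℝ) (u v : ℝ) : ℝ := (f v - f u) / (v - u)

lemma triple_erase1 {t1 t2 t3 : ℝ} (h12 : t1 < t2) (h23 : t2 < t3) :
    ({t1, t2, t3} : Finset ℝ).erase t1 = {t2, t3} := by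
  apply Finset.erase_insert
  simp only [Finset.mem_insert, Finset.mem_singleton]
  push_neg
  exact ⟨ne_of_lt h12, ne_of_lt (h12.trans h23)⟩

lemma triple_erase3 {t1 t2 t3 : ℝ} (h12 : t1 < t2) (h23 : t2 < t3) :
    ({t1, t2, t3} : Finset ℝ).erase t3 = {t1, t2} := by
  ext y
  simp only [Finset.mem_erase, Finset.mem_insert, Finset.mem_singleton]
  constructor
  · rintro ⟨hne, rfl | rfl | rfl⟩
    · exact Or.inl rfl
    · exact Or.inr rfl
    · exact absurd rfl hne
  · rintro (rfl | rfl)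
    · exact ⟨ne_of_lt (h12.trans h23), Or.inl rfl⟩
    · exact ⟨ne_of_lt h23, Or.inr (Or.inl rfl)⟩

lemma slope_mono {h : ℝ → ℝ} {U : Set ℝ} (ht : Dtone 2 h U) {t1 t2 t3 : ℝ}
    (h1 : t1 ∈ U) (h2 : t2 ∈ U) (h3 : t3 ∈ U) (h12 : t1 < t2) (h23 : t2 < t3) :
    sl h t1 t2 ≤ sl h t2 t3 := by
  have h13 := h12.trans h23
  have hcard : ({t1, t2, t3} : Finset ℝ).card = 3 := by
    rw [Finset.card_insert_of_notMem, Finset.card_insert_of_notMem, Finset.card_singleton]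
    · simp [ne_of_lt h23]
    · simp only [Finset.mem_insert, Finset.mem_singleton]
      push_neg
      exact ⟨ne_of_lt h12, ne_of_lt h13⟩
  have hsub : ↑({t1, t2, t3} : Finset ℝ) ⊆ U := by
    intro y hy
    rcases Finset.mem_insert.mp hy with rfl | hy2
    · exact h1
    rcases Finset.mem_insert.mp hy2 with rfl | hy3
    · exact h2
    · rw [Finset.mem_singleton] at hy3; exact hy3 ▸ h3
  have h0 := ht _ hcard hsub
  have hm1 : t1 ∈ ({t1, t2, t3} : Finset ℝ) := by simp
  have hm3 : t3 ∈ ({t1, t2, t3} : Finset ℝ) := by simp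
  rw [DD_rec h hm1 hm3 (ne_of_lt h13), triple_erase1 h12 h23, triple_erase3 h12 h23,
    DD_pair h (ne_of_lt h12), DD_pair h (ne_of_lt h23)] at h0
  have key : (h t1 - h t2) / (t1 - t2) = sl h t1 t2 := by
    rw [sl, ← neg_div_neg_eq]; ring_nf
  have key2 : (h t2 - h t3) / (t2 - t3) = sl h t2 t3 := by
    rw [sl, ← neg_div_neg_eq]; ring_nf
  rw [key, key2] at h0
  rcases div_nonneg_iff.mp h0 with ⟨_, hge⟩ | ⟨hle, _⟩
  · linarith
  · linarith

lemma sl_left_mono {h : ℝ → ℝ} {U : Set ℝ} (ht : Dtone 2 h U) {p t t' : ℝ}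
    (hp : p ∈ U) (h1 : t ∈ U) (h2 : t' ∈ U) (hpt : p < t) (htt : t < t') :
    sl h p t ≤ sl h p t' := by
  have key := slope_mono ht hp h1 h2 hpt htt
  have d1 : (0:ℝ) < t - p := by linarith
  have d2 : (0:ℝ) < t' - t := by linarith
  have d3 : (0:ℝ) < t' - p := by linarith
  rw [sl, sl, div_le_div_iff₀ d1 d3]
  rw [sl, sl, div_le_div_iff₀ d1 d2] at key
  nlinarith

lemma exists_pt {u v : ℝ} (huv : u < v) (S : Finset ℝ) (x : ℝ) :
    ∃ t, t ∈ Set.Ioo u v ∧ t ∉ S ∧ t ≠ x := by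
  have hinf : (Set.Ioo u v).Infinite := Set.Ioo_infinite huv
  have : ((Set.Ioo u v) \ (↑S ∪ {x})).Infinite :=
    hinf.diff ((S.finite_toSet).union (Set.finite_singleton x))
  obtain ⟨t, ht⟩ := this.nonempty
  exact ⟨t, ht.1, fun hc => ht.2 (Or.inl hc), fun hc => ht.2 (Or.inr hc)⟩

lemma tendsto_sSup_left {E : Set ℝ} {φ : ℝ → ℝ} {x : ℝ}
    (hE : E ⊆ Set.Iio x) (hne : E.Nonempty)
    (mono : ∀ t ∈ E, ∀ t' ∈ E, t ≤ t' → φ t ≤ φ t')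
    (bdd : BddAbove (φ '' E)) :
    Tendsto φ (𝓝[E] x) (𝓝 (sSup (φ '' E))) := by
  refine tendsto_order.2 ⟨fun l hl => ?_, fun m hm => ?_⟩
  · obtain ⟨y, ⟨z, hzE, rfl⟩, lz⟩ := exists_lt_of_lt_csSup (hne.image φ) hl
    have : Set.Ioi z ∈ 𝓝[E] x :=
      mem_nhdsWithin_of_mem_nhds (Ioi_mem_nhds (hE hzE))
    filter_upwards [this, self_mem_nhdsWithin] with w hw hwE
    exact lz.trans_le (mono z hzE w hwE (le_of_lt hw))
  · filter_upwards [self_mem_nhdsWithin] with w hwE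
    exact (le_csSup bdd (Set.mem_image_of_mem _ hwE)).trans_lt hm

lemma tendsto_sInf_right {E : Set ℝ} {φ : ℝ → ℝ} {x : ℝ}
    (hE : E ⊆ Set.Ioi x) (hne : E.Nonempty)
    (mono : ∀ t ∈ E, ∀ t' ∈ E, t ≤ t' → φ t ≤ φ t')
    (bdd : BddBelow (φ '' E)) :
    Tendsto φ (𝓝[E] x) (𝓝 (sInf (φ '' E))) := by
  refine tendsto_order.2 ⟨fun l hl => ?_, fun m hm => ?_⟩
  · filter_upwards [self_mem_nhdsWithin] with w hwE
    exact hl.trans_le (csInf_le bdd (Set.mem_image_of_mem _ hwE))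
  · obtain ⟨y, ⟨z, hzE, rfl⟩, lz⟩ := exists_lt_of_csInf_lt (hne.image φ) hm
    have : Set.Iio z ∈ 𝓝[E] x :=
      mem_nhdsWithin_of_mem_nhds (Iio_mem_nhds (hE hzE))
    filter_upwards [this, self_mem_nhdsWithin] with w hw hwE
    exact (mono w hwE z hzE (le_of_lt hw)).trans_lt lz

lemma neBot_side {S : Finset ℝ} {a b p1 p2 p3 x : ℝ} (hab : a < p2) (hp1p2 : p1 < p2)
    (hp2x : p2 < x) (hxp3 : x < p3) (hxb : x < b) :
    (𝓝[((Set.Ioo a b \ ↑S) \ {x}) ∩ Set.Ioo p1 p3 ∩ Set.Iio x] x).NeBot := by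
  rw [← mem_closure_iff_nhdsWithin_neBot]
  rw [Metric.mem_closure_iff]
  intro ε hε
  have hlt : max p2 (x - ε) < x := by
    rw [max_lt_iff]; exact ⟨hp2x, by linarith⟩
  obtain ⟨t, htI, htS, htx⟩ := exists_pt hlt S x
  have ht1 : max p2 (x - ε) < t := htI.1
  have hp2t : p2 < t := (le_max_left _ _).trans_lt ht1
  refine ⟨t, ⟨⟨⟨⟨⟨hab.trans hp2t, htI.2.trans hxb⟩, htS⟩, by simpa using htx⟩,
    ⟨hp1p2.trans hp2t, htI.2.trans hxp3⟩⟩, htI.2⟩, ?_⟩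
  rw [Real.dist_eq, abs_lt]
  constructor <;> [linarith [htI.2]; linarith [le_max_right p2 (x - ε), ht1]]

lemma neBot_side' {S : Finset ℝ} {a b p1 p3 q x : ℝ} (hp1x : p1 < x) (hax : a < x)
    (hxq : x < q) (hqp3 : q < p3) (hqb : q < b) :
    (𝓝[((Set.Ioo a b \ ↑S) \ {x}) ∩ Set.Ioo p1 p3 ∩ Set.Ioi x] x).NeBot := by
  rw [← mem_closure_iff_nhdsWithin_neBot]
  rw [Metric.mem_closure_iff]
  intro ε hε
  have hlt : x < min q (x + ε) := by
    rw [lt_min_iff]; exact ⟨hxq, by linarith⟩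
  obtain ⟨t, htI, htS, htx⟩ := exists_pt hlt S x
  have ht2 : t < min q (x + ε) := htI.2
  have htq : t < q := ht2.trans_le (min_le_left _ _)
  refine ⟨t, ⟨⟨⟨⟨⟨hax.trans htI.1, htq.trans hqb⟩, htS⟩, by simpa using htx⟩,
    ⟨hp1x.trans htI.1, htq.trans hqp3⟩⟩, htI.1⟩, ?_⟩
  rw [Real.dist_eq, abs_lt]
  constructor <;> [linarith [ht2.trans_le (min_le_right q (x + ε))]; linarith [htI.1]]

lemma Qlim_base {a b : ℝ} {S : Finset ℝ} {h : ℝ → ℝ}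
    (ht : Dtone 2 h (Set.Ioo a b \ ↑S)) {x : ℝ} (hx : x ∈ Set.Ioo a b) :
    ∃ L, Tendsto h (𝓝[(Set.Ioo a b \ ↑S) \ {x}] x) (𝓝 L) := by
  set U : Set ℝ := Set.Ioo a b \ ↑S with hU
  set D : Set ℝ := U \ {x} with hD
  obtain ⟨p1, hp1I, hp1S, hp1x⟩ := exists_pt hx.1 S x
  obtain ⟨p2, hp2I, hp2S, hp2x⟩ := exists_pt hp1I.2 S x
  obtain ⟨p4, hp4I, hp4S, hp4x⟩ := exists_pt hx.2 S x
  obtain ⟨p3, hp3I, hp3S, hp3x⟩ := exists_pt hp4I.1 S x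
  obtain ⟨q, hqI, hqS, hqx⟩ := exists_pt hp3I.1 S x
  -- basic order facts
  have hap1 : a < p1 := hp1I.1
  have hp1p2 : p1 < p2 := hp2I.1
  have hp2xlt : p2 < x := hp2I.2
  have hxq : x < q := hqI.1
  have hqp3 : q < p3 := hqI.2
  have hxp3 : x < p3 := hxq.trans hqp3
  have hp3p4 : p3 < p4 := hp3I.2
  have hp4b : p4 < b := hp4I.2
  have hp1U : p1 ∈ U := ⟨⟨hap1, hp1I.2.trans hx.2⟩, hp1S⟩
  have hp2U : p2 ∈ U := ⟨⟨hap1.trans hp1p2, hp2xlt.trans hx.2⟩, hp2S⟩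
  have hp3U : p3 ∈ U := ⟨⟨hx.1.trans hxp3, hp3p4.trans hp4b⟩, hp3S⟩
  have hp4U : p4 ∈ U := ⟨⟨hx.1.trans hp4I.1, hp4b⟩, hp4S⟩
  have hqU : q ∈ U := ⟨⟨hx.1.trans hxq, (hqp3.trans hp3p4).trans hp4b⟩, hqS⟩
  set E : Set ℝ := D ∩ Set.Ioo p1 p3 with hE
  set El : Set ℝ := E ∩ Set.Iio x with hEl
  set Er : Set ℝ := E ∩ Set.Ioi x with hEr
  have hEU : ∀ t ∈ E, t ∈ U := fun t htE => htE.1.1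
  have hEp1 : ∀ t ∈ E, p1 < t := fun t htE => htE.2.1
  have hEp3 : ∀ t ∈ E, t < p3 := fun t htE => htE.2.2
  set φ : ℝ → ℝ := fun t => sl h p1 t with hφ
  have mono : ∀ t ∈ E, ∀ t' ∈ E, t ≤ t' → φ t ≤ φ t' := by
    intro t htE t' ht'E hle
    rcases eq_or_lt_of_le hle with rfl | hlt
    · exact le_refl _
    · exact sl_left_mono ht hp1U (hEU t htE) (hEU t' ht'E) (hEp1 t htE) hlt
  have hMb : ∀ t ∈ E, φ t ≤ sl h p3 p4 := by
    intro t htE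
    have h1 : sl h p1 t ≤ sl h t p3 :=
      slope_mono ht hp1U (hEU t htE) hp3U (hEp1 t htE) (hEp3 t htE)
    have h2 : sl h t p3 ≤ sl h p3 p4 :=
      slope_mono ht (hEU t htE) hp3U hp4U (hEp3 t htE) hp3p4
    exact h1.trans h2
  have hp2El : p2 ∈ El := ⟨⟨⟨hp2U, by simpa using hp2x⟩, ⟨hp1p2, hp2xlt.trans hxp3⟩⟩, hp2xlt⟩
  have hqEr : q ∈ Er := ⟨⟨⟨hqU, by simpa using hqx⟩, ⟨hp1I.2.trans hxq, hqp3⟩⟩, hxq⟩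
  have hElsub : El ⊆ Set.Iio x := fun t ht => ht.2
  have hErsub : Er ⊆ Set.Ioi x := fun t ht => ht.2
  have hElE : El ⊆ E := fun t ht => ht.1
  have hErE : Er ⊆ E := fun t ht => ht.1
  have bddA : BddAbove (φ '' El) := by
    refine ⟨sl h p3 p4, ?_⟩
    rintro y ⟨t, htEl, rfl⟩
    exact hMb t (hElE htEl)
  have bddB : BddBelow (φ '' Er) := by
    refine ⟨φ p2, ?_⟩
    rintro y ⟨t, htEr, rfl⟩
    exact mono p2 (hElE hp2El) t (hErE htEr) (le_of_lt (hp2xlt.trans htEr.2))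
  have monoEl : ∀ t ∈ El, ∀ t' ∈ El, t ≤ t' → φ t ≤ φ t' :=
    fun t ht t' ht' => mono t (hElE ht) t' (hElE ht')
  have monoEr : ∀ t ∈ Er, ∀ t' ∈ Er, t ≤ t' → φ t ≤ φ t' :=
    fun t ht t' ht' => mono t (hErE ht) t' (hErE ht')
  set Lm := sSup (φ '' El) with hLm
  set Lp := sInf (φ '' Er) with hLp
  have tendL : Tendsto φ (𝓝[El] x) (𝓝 Lm) :=
    tendsto_sSup_left hElsub ⟨p2, hp2El⟩ monoEl bddA
  have tendR : Tendsto φ (𝓝[Er] x) (𝓝 Lp) :=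
    tendsto_sInf_right hErsub ⟨q, hqEr⟩ monoEr bddB
  have hLmLp : Lm ≤ Lp := by
    apply csSup_le (Set.Nonempty.image φ ⟨p2, hp2El⟩)
    rintro y ⟨t, htEl, rfl⟩
    apply le_csInf (Set.Nonempty.image φ ⟨q, hqEr⟩)
    rintro v ⟨t', ht'Er, rfl⟩
    exact mono t (hElE htEl) t' (hErE ht'Er) (le_of_lt (htEl.2.trans ht'Er.2))
  set A := h p1 + (x - p1) * Lm with hA
  set B := h p1 + (x - p1) * Lp with hB
  have hxp1 : (0:ℝ) < x - p1 := by linarith [hp1I.2]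
  have heqE : ∀ t ∈ E, h t = h p1 + (t - p1) * φ t := by
    intro t htE
    have hne : t - p1 ≠ 0 := ne_of_gt (by linarith [hEp1 t htE])
    rw [hφ]
    simp only [sl]
    field_simp
    ring
  have tendsub : Tendsto (fun t : ℝ => t - p1) (𝓝 x) (𝓝 (x - p1)) :=
    (continuous_id.sub continuous_const).tendsto x
  have htendL : Tendsto h (𝓝[El] x) (𝓝 A) := by
    have base : Tendsto (fun t : ℝ => h p1 + (t - p1) * φ t) (𝓝[El] x) (𝓝 A) := by
      rw [hA]
      exact Tendsto.const_add _ ((tendsub.mono_left nhdsWithin_le_nhds).mul tendL)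
    apply base.congr'
    exact eventually_of_mem self_mem_nhdsWithin fun t ht => (heqE t (hElE ht)).symm
  have htendR : Tendsto h (𝓝[Er] x) (𝓝 B) := by
    have base : Tendsto (fun t : ℝ => h p1 + (t - p1) * φ t) (𝓝[Er] x) (𝓝 B) := by
      rw [hB]
      exact Tendsto.const_add _ ((tendsub.mono_left nhdsWithin_le_nhds).mul tendR)
    apply base.congr'
    exact eventually_of_mem self_mem_nhdsWithin fun t ht => (heqE t (hErE ht)).symm
  haveI nbL : (𝓝[El] x).NeBot := neBot_side (hap1.trans hp1p2) hp1p2 hp2xlt hxp3 hx.2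
  haveI nbR : (𝓝[Er] x).NeBot :=
    neBot_side' hp1I.2 hx.1 hxq hqp3 (hqp3.trans (hp3p4.trans hp4b))
  have hBA : B ≤ A := by
    have key : ∀ v ∈ Er, h v ≤ A + sl h p3 p4 * (v - x) := by
      intro v hvEr
      have hvU := hEU v (hErE hvEr)
      have hvp3 := hEp3 v (hErE hvEr)
      have step : ∀ u ∈ El, h v ≤ h u + sl h p3 p4 * (v - u) := by
        intro u huEl
        have huU := hEU u (hElE huEl)
        have huv : u < v := huEl.2.trans hvEr.2
        have s1 : sl h u v ≤ sl h v p3 := slope_mono ht huU hvU hp3U huv hvp3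
        have s2 : sl h v p3 ≤ sl h p3 p4 := slope_mono ht hvU hp3U hp4U hvp3 hp3p4
        have hvu : (0:ℝ) < v - u := by linarith
        have hfin : (h v - h u) / (v - u) ≤ sl h p3 p4 := s1.trans s2
        rw [div_le_iff₀ hvu] at hfin
        linarith
      have tendRHS : Tendsto (fun u => h u + sl h p3 p4 * (v - u)) (𝓝[El] x)
          (𝓝 (A + sl h p3 p4 * (v - x))) := by
        apply htendL.add
        apply Tendsto.const_mul
        exact (Tendsto.const_sub _ (tendsto_id.mono_left nhdsWithin_le_nhds))
      exact ge_of_tendsto tendRHS (eventually_of_mem self_mem_nhdsWithin step)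
    have tendRHS2 : Tendsto (fun v => A + sl h p3 p4 * (v - x)) (𝓝[Er] x)
        (𝓝 (A + sl h p3 p4 * (x - x))) := by
      apply Tendsto.const_add
      apply Tendsto.const_mul
      exact (Tendsto.sub_const (tendsto_id.mono_left nhdsWithin_le_nhds) _)
    have hle := le_of_tendsto_of_tendsto htendR tendRHS2
      (eventually_of_mem self_mem_nhdsWithin key)
    simpa using hle
  have hAB : A ≤ B := by
    have := mul_le_mul_of_nonneg_left hLmLp (le_of_lt hxp1)
    rw [hA, hB]
    linarith
  have hABeq : B = A := le_antisymm hBA hAB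
  refine ⟨A, ?_⟩
  have hres : 𝓝[D] x = 𝓝[E] x := nhdsWithin_restrict D ⟨hp1I.2.trans_le (le_refl x) |>.trans_le (le_refl x) |> fun _ => hp1I.2, hxp3⟩ isOpen_Ioo
  have hsplitE : E = El ∪ Er := by
    ext t
    constructor
    · intro htE
      have hne : t ≠ x := by
        have := htE.1.2
        simpa using this
      rcases lt_or_gt_of_ne hne with hlt | hgt
      · exact Or.inl ⟨htE, hlt⟩
      · exact Or.inr ⟨htE, hgt⟩
    · rintro (ht | ht) <;> exact ht.1
  rw [hres, hsplitE, nhdsWithin_union]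
  rw [tendsto_sup]
  exact ⟨htendL, hABeq ▸ htendR⟩

lemma Qlim {a b : ℝ} : ∀ m, 2 ≤ m → ∀ (h : ℝ → ℝ) (S : Finset ℝ),
    Dtone m h (Set.Ioo a b \ ↑S) → ∀ x ∈ Set.Ioo a b,
    ∃ L, Tendsto h (𝓝[(Set.Ioo a b \ ↑S) \ {x}] x) (𝓝 L) := by
  intro m hm
  induction m, hm using Nat.le_induction with
  | base =>
    intro h S ht x hx
    exact Qlim_base ht hx
  | succ m hm ih =>
    intro h S ht x hx
    obtain ⟨c, hcI, hcS, hcx⟩ := exists_pt (hx.1.trans hx.2) S x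
    have hcU : c ∈ Set.Ioo a b \ ↑S := ⟨hcI, hcS⟩
    have hseteq : (Set.Ioo a b \ ↑S) \ {c} = Set.Ioo a b \ ↑(insert c S) := by
      ext t
      simp only [Set.mem_diff, Set.mem_singleton_iff, Finset.coe_insert, Set.mem_insert_iff,
        Finset.mem_coe]
      tauto
    have htc : Dtone m (fun t => (h t - h c) / (t - c)) (Set.Ioo a b \ ↑(insert c S)) := by
      rw [← hseteq]
      exact Dtone_slope ht hcU
    obtain ⟨L', hL'⟩ := ih _ (insert c S) htc x hx
    refine ⟨h c + (x - c) * L', ?_⟩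
    have hfeq : 𝓝[(Set.Ioo a b \ ↑S) \ {x}] x
        = 𝓝[(Set.Ioo a b \ ↑(insert c S)) \ {x}] x := by
      apply nhdsWithin_eq_nhdsWithin' (s := ({c}ᶜ : Set ℝ))
        (isOpen_compl_singleton.mem_nhds (by simpa using hcx.symm))
      ext y
      simp only [Set.mem_inter_iff, Set.mem_diff, Set.mem_singleton_iff, Finset.coe_insert,
        Set.mem_insert_iff, Finset.mem_coe, Set.mem_compl_iff]
      tauto
    rw [hfeq]
    have base : Tendsto (fun t => h c + (t - c) * ((h t - h c) / (t - c)))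
        (𝓝[(Set.Ioo a b \ ↑(insert c S)) \ {x}] x) (𝓝 (h c + (x - c) * L')) := by
      apply Tendsto.const_add
      refine Tendsto.mul ?_ hL'
      exact (Tendsto.sub_const (tendsto_id.mono_left nhdsWithin_le_nhds) _)
    apply base.congr'
    apply eventually_of_mem self_mem_nhdsWithin
    intro t htmem
    have htc' : t ≠ c := by
      intro hh
      exact htmem.1.2 (by simp [hh])
    have : t - c ≠ 0 := sub_ne_zero.mpr htc'
    field_simp
    ring

lemma hasDeriv_of_Dtone {a b : ℝ} {k : ℕ} (hk : 2 ≤ k) {f : ℝ → ℝ}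
    (ht : Dtone (k+1) f (Set.Ioo a b)) {x : ℝ} (hx : x ∈ Set.Ioo a b) :
    ∃ L, HasDerivAt f L x := by
  have h1 : Dtone k (fun t => (f t - f x) / (t - x)) (Set.Ioo a b \ {x}) := Dtone_slope ht hx
  have h2 : Dtone k (fun t => (f t - f x) / (t - x)) (Set.Ioo a b \ ↑({x} : Finset ℝ)) := by
    simpa using h1
  obtain ⟨L, hL⟩ := Qlim k hk _ {x} h2 x hx
  refine ⟨L, ?_⟩
  rw [hasDerivAt_iff_tendsto_slope]
  have hfe : 𝓝[≠] x = 𝓝[(Set.Ioo a b \ ↑({x} : Finset ℝ)) \ {x}] x := by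
    apply nhdsWithin_eq_nhdsWithin' (s := Set.Ioo a b) (isOpen_Ioo.mem_nhds hx)
    ext y
    simp only [Set.mem_inter_iff, Set.mem_diff, Set.mem_singleton_iff, Set.mem_compl_iff,
      Finset.coe_singleton]
    tauto
  rw [hfe]
  apply hL.congr'
  apply eventually_of_mem self_mem_nhdsWithin
  intro t htmem
  have : t ≠ x := htmem.2
  rw [slope_def_field]

lemma DD_image_shift (f : ℝ → ℝ) (s : Finset ℝ) (h : ℝ) :
    DD f (s.image (· + h)) = ∑ x ∈ s, f (x + h) / ∏ y ∈ s.erase x, (x - y) := by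
  have hinj : Function.Injective (· + h) := add_left_injective h
  rw [DD, Finset.sum_image (fun x _ y _ hxy => hinj hxy)]
  apply Finset.sum_congr rfl
  intro x hx
  congr 1
  rw [← Finset.image_erase hinj]
  rw [Finset.prod_image (fun u _ v _ huv => hinj huv)]
  apply Finset.prod_congr rfl
  intro y _
  ring

lemma deriv_Dtone {a b : ℝ} {k : ℕ} {f : ℝ → ℝ} (ht : Dtone (k+1) f (Set.Ioo a b))
    (hd : ∀ x ∈ Set.Ioo a b, HasDerivAt f (deriv f x) x) :
    Dtone k (deriv f) (Set.Ioo a b) := by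
  intro s hcard hsub
  have hsne : s.Nonempty := Finset.card_pos.mp (by omega)
  set M := s.max' hsne with hM
  have hMs : M ∈ s := s.max'_mem hsne
  have hMb : M < b := (hsub hMs).2
  set F : ℝ → ℝ := fun h => ∑ x ∈ s, ((f (x + h) - f x) * h⁻¹) / ∏ y ∈ s.erase x, (x - y)
    with hF
  have htend : Tendsto F (𝓝[>] (0:ℝ)) (𝓝 (DD (deriv f) s)) := by
    rw [DD, hF]
    apply tendsto_finset_sum
    intro x hxs
    apply Tendsto.div_const
    have := (hd x (hsub hxs)).tendsto_slope_zero_right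
    simpa [smul_eq_mul, mul_comm] using this
  have hev : ∀ᶠ h in 𝓝[>] (0:ℝ), 0 ≤ F h := by
    have hmem : Set.Ioo (0:ℝ) (b - M) ∈ 𝓝[>] (0:ℝ) :=
      Ioo_mem_nhdsGT_of_mem ⟨le_refl _, by linarith⟩
    filter_upwards [hmem] with h hh
    have hpos : 0 < h := hh.1
    have hshsub : ↑(s.image (· + h)) ⊆ Set.Ioo a b := by
      intro y hy
      obtain ⟨t, hts, rfl⟩ := Finset.mem_image.mp (by exact_mod_cast hy)
      have h1 := hsub hts
      have h2 : t ≤ M := s.le_max' t hts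
      exact ⟨by linarith [h1.1], by linarith [hh.2]⟩
    have hstep := DD_shift ht hcard hsub hpos hshsub
    have heqF : F h = (DD f (s.image (· + h)) - DD f s) * h⁻¹ := by
      rw [hF, DD_image_shift, DD, ← Finset.sum_sub_distrib, Finset.sum_mul]
      apply Finset.sum_congr rfl
      intro x hx
      rw [div_sub_div_same, sub_div]
      ring
    rw [heqF]
    have : 0 ≤ DD f (s.image (· + h)) - DD f s := by linarith
    positivity
  exact ge_of_tendsto htend hev

lemma convexOn_congr {s : Set ℝ} {f g : ℝ → ℝ} (hf : ConvexOn ℝ s f)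
    (h : ∀ x ∈ s, g x = f x) : ConvexOn ℝ s g := by
  refine ⟨hf.1, ?_⟩
  intro x hx y hy α β hα hβ hαβ
  have hmem : α • x + β • y ∈ s := hf.1 hx hy hα hβ hαβ
  rw [h _ hmem, h _ hx, h _ hy]
  exact hf.2 hx hy hα hβ hαβ

lemma main_induction {a b : ℝ} : ∀ k, 2 ≤ k → ∀ f : ℝ → ℝ, Dtone k f (Set.Ioo a b) →
    ContDiffOn ℝ (k - 2 : ℕ) f (Set.Ioo a b) ∧
    ConvexOn ℝ (Set.Ioo a b) (iteratedDerivWithin (k - 2) f (Set.Ioo a b)) := by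
  intro k hk
  induction k, hk using Nat.le_induction with
  | base =>
    intro f ht
    have hconv : ConvexOn ℝ (Set.Ioo a b) f := by
      apply convexOn_of_slope_mono_adjacent (convex_Ioo a b)
      intro x y z hx hz hxy hyz
      have hyI : y ∈ Set.Ioo a b := ⟨hx.1.trans hxy, hyz.trans hz.2⟩
      exact slope_mono ht hx hyI hz hxy hyz
    have h0 : (2 : ℕ) - 2 = 0 := rfl
    rw [h0]
    constructor
    · rw [show (((0:ℕ)) : WithTop ℕ∞) = 0 by simp, contDiffOn_zero]
      have := hconv.continuousOn_interior
      rwa [interior_Ioo] at this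
    · rw [iteratedDerivWithin_zero]
      exact hconv
  | succ k hk ih =>
    intro f ht
    have hder : ∀ x ∈ Set.Ioo a b, HasDerivAt f (deriv f x) x := by
      intro x hx
      obtain ⟨L, hL⟩ := hasDeriv_of_Dtone hk ht hx
      exact hL.deriv ▸ hL
    have hdtone : Dtone k (deriv f) (Set.Ioo a b) := deriv_Dtone ht hder
    obtain ⟨hcd, hcv⟩ := ih (deriv f) hdtone
    have huniq : UniqueDiffOn ℝ (Set.Ioo a b) := isOpen_Ioo.uniqueDiffOn
    have heqderiv : ∀ x ∈ Set.Ioo a b, derivWithin f (Set.Ioo a b) x = deriv f x :=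
      fun x hx => derivWithin_of_isOpen isOpen_Ioo hx
    have hsub : k + 1 - 2 = (k - 2) + 1 := by omega
    rw [hsub]
    constructor
    · rw [show ((((k-2)+1 : ℕ)) : WithTop ℕ∞) = ((k-2:ℕ) : WithTop ℕ∞) + 1 by push_cast; ring]
      rw [contDiffOn_succ_iff_derivWithin huniq]
      refine ⟨fun x hx => (hder x hx).differentiableAt.differentiableWithinAt, ?_, ?_⟩
      · intro hω
        simp at hω
      · exact hcd.congr heqderiv
    · have hpt : ∀ x ∈ Set.Ioo a b, iteratedDerivWithin ((k-2)+1) f (Set.Ioo a b) x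
          = iteratedDerivWithin (k-2) (deriv f) (Set.Ioo a b) x := by
        intro x hx
        rw [iteratedDerivWithin_succ']
        exact iteratedDerivWithin_congr (fun y hy => heqderiv y hy) hx
      exact convexOn_congr hcv hpt

theorem ktone_contDiff_and_convex (f : ℝ → ℝ) (a b : ℝ) (hab : a < b) (k : ℕ) (hk : 2 ≤ k)
    (htone : ∀ x : Fin (k + 1) → ℝ, Function.Injective x →
      (∀ i, x i ∈ Set.Ioo a b) → 0 ≤ divDiff f k x) :
    ContDiffOn ℝ (k - 2 : ℕ) f (Set.Ioo a b) ∧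
    ConvexOn ℝ (Set.Ioo a b) (iteratedDerivWithin (k - 2) f (Set.Ioo a b)) := by
  apply main_induction k hk f
  intro s hcard hsub
  set x : Fin (k+1) → ℝ := fun i => (s.orderIsoOfFin hcard i : ℝ) with hx
  have hinj : Function.Injective x := by
    intro i j hij
    have := Subtype.coe_injective hij
    exact (s.orderIsoOfFin hcard).injective this
  have himg : Finset.image x Finset.univ = s := by
    ext y
    simp only [Finset.mem_image, Finset.mem_univ, true_and]
    constructor
    · rintro ⟨i, rfl⟩
      exact (s.orderIsoOfFin hcard i).2
    · intro hy
      refine ⟨(s.orderIsoOfFin hcard).symm ⟨y, hy⟩, ?_⟩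
      show ((s.orderIsoOfFin hcard) ((s.orderIsoOfFin hcard).symm ⟨y, hy⟩) : ℝ) = y
      rw [OrderIso.apply_symm_apply]
  have := htone x hinj (fun i => hsub (by
    rw [← himg]
    exact Finset.mem_image_of_mem _ (Finset.mem_univ i)))
  rwa [divDiff_eq_DD f k x hinj, himg] at this
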